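/- Let p be an odd prime, let g be a primitive root modulo p, and let χ be a Dirichlet character modulo p (with complex values) of order p−1 with χ(g) = η, so that η is a primitive (p−1)-th root of unity. For 0 ≤ ℓ ≤ p−2 write χ_ℓ = χ^ℓ and β_ℓ(p−1) = Σ_{1≤i≤p−1, i odd, gcd(i,p−1)>1} η^{iℓ}. Then for every integer x not divisible by p, the sum Σ_{ℓ=0}^{p−2} β_ℓ(p−1)·χ_ℓ(x) equals p−1 if x is a QNRNP modulo p, and equals 0 otherwise. -/

import Mathlib

open Finset

/-- An integer `g` is a primitive root modulo `p`: its residue class generates the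
multiplicative group of `ℤ/pℤ`, i.e. every nonzero residue is a power of `g`. -/
def IsPrimitiveRootModP (p : ℕ) (g : ℤ) : Prop :=
  ∀ a : ZMod p, a ≠ 0 → ∃ k : ℕ, (g : ZMod p) ^ k = a

/-- `g` is a quadratic non-residue modulo `p` which is not a primitive root modulo `p`. -/
def IsQNRNP (p : ℕ) (g : ℤ) : Prop :=
  (¬ ∃ x : ℤ, x ^ 2 ≡ g [ZMOD p]) ∧ ¬ IsPrimitiveRootModP p g

lemma prim_iff_order (p : ℕ) [Fact p.Prime] (z : ZMod p) (hz : z ≠ 0) :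
    (∀ a : ZMod p, a ≠ 0 → ∃ k : ℕ, z ^ k = a) ↔ orderOf z = p - 1 := by
  obtain ⟨u, hu⟩ := isUnit_iff_ne_zero.mpr hz
  have hcard : Nat.card (ZMod p)ˣ = p - 1 := by
    rw [Nat.card_eq_fintype_card, ZMod.card_units p]
  have horder : orderOf z = orderOf u := by rw [← hu, orderOf_units]
  constructor
  · intro h
    rw [horder, ← hcard]
    apply orderOf_eq_card_of_forall_mem_zpowers
    intro v
    rw [← mem_powers_iff_mem_zpowers]
    obtain ⟨k, hk⟩ := h (↑v) (Units.ne_zero v)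
    exact ⟨k, Units.ext (by rw [Units.val_pow_eq_pow_val, hu, hk])⟩
  · intro h a ha
    obtain ⟨v, hv⟩ := isUnit_iff_ne_zero.mpr ha
    have htop : Subgroup.zpowers u = ⊤ := by
      apply Subgroup.eq_top_of_card_eq
      rw [Nat.card_zpowers, ← horder, h, hcard]
    have hm : v ∈ Submonoid.powers u := by
      rw [mem_powers_iff_mem_zpowers, htop]; trivial
    obtain ⟨k, hk⟩ := hm
    have hk' : u ^ k = v := hk
    exact ⟨k, by rw [← hu, ← Units.val_pow_eq_pow_val, hk', hv]⟩

lemma geo_sum (n : ℕ) (η : ℂ) (hη : IsPrimitiveRoot η n) (k : ℕ) :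
    ∑ ℓ ∈ Finset.range n, (η ^ k) ^ ℓ = if n ∣ k then (n : ℂ) else 0 := by
  by_cases h : n ∣ k
  · rw [if_pos h, (hη.pow_eq_one_iff_dvd k).mpr h]
    simp
  · rw [if_neg h, geom_sum_eq (fun h1 => h ((hη.pow_eq_one_iff_dvd k).mp h1))]
    rw [← pow_mul, mul_comm, pow_mul, hη.pow_eq_one, one_pow, sub_self, zero_div]

open scoped Classical in
theorem stmt4 (p : ℕ) [Fact p.Prime] (hp2 : p ≠ 2)
    (g : ℤ) (hg : IsPrimitiveRootModP p g)
    (χ : DirichletCharacter ℂ p) (hχ : orderOf χ = p - 1)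
    (η : ℂ) (hgη : χ (g : ZMod p) = η) (hη : IsPrimitiveRoot η (p - 1))
    (x : ℤ) (hx : ¬ (p : ℤ) ∣ x) :
    ∑ ℓ ∈ Finset.range (p - 1),
        (∑ i ∈ (Finset.Icc 1 (p - 1)).filter (fun i => Odd i ∧ 1 < Nat.gcd i (p - 1)),
            η ^ (i * ℓ)) * (χ ^ ℓ) (x : ZMod p)
      = if IsQNRNP p x then ((p : ℂ) - 1) else 0 := by
  have hp := Fact.out (p := p.Prime)
  have hp3 : 3 ≤ p := by
    have := hp.two_le
    omega
  have heven : (p - 1) % 2 = 0 := by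
    have hodd : p % 2 = 1 := Nat.odd_iff.mp (hp.odd_of_ne_two hp2)
    omega
  set gz : ZMod p := (g : ZMod p) with hgz
  have h2ne : ((2 : ℕ) : ZMod p) ≠ 0 := by
    rw [Ne, ZMod.natCast_eq_zero_iff]
    intro hd
    have := Nat.le_of_dvd (by norm_num) hd
    omega
  have hg0 : gz ≠ 0 := by
    intro h0
    obtain ⟨k, hk⟩ := hg ((2 : ℕ) : ZMod p) h2ne
    rw [← hgz, h0] at hk
    rcases Nat.eq_zero_or_pos k with hk0 | hk0
    · rw [hk0, pow_zero] at hk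
      have h21 : ((2 : ℕ) : ZMod p) = 1 := hk.symm
      have : (1 : ZMod p) = 0 := by push_cast at h21; linear_combination h21
      exact one_ne_zero this
    · rw [zero_pow (by omega)] at hk
      exact h2ne hk.symm
  have hog : orderOf gz = p - 1 := (prim_iff_order p gz hg0).mp hg
  have hx0 : (x : ZMod p) ≠ 0 := by
    rw [Ne, ZMod.intCast_zmod_eq_zero_iff_dvd]; exact hx
  obtain ⟨m0, hm0⟩ := hg ((x : ℤ) : ZMod p) hx0
  set m : ℕ := m0 % (p - 1) with hmdef
  have hm : gz ^ m = ((x : ℤ) : ZMod p) := by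
    rw [hmdef, ← hog, pow_mod_orderOf, hog, ← hgz] at *
    exact hm0
  have hmlt : m < p - 1 := Nat.mod_lt _ (by omega)
  set S := (Finset.Icc 1 (p - 1)).filter (fun i => Odd i ∧ 1 < Nat.gcd i (p - 1)) with hS
  have hxu : IsUnit ((x : ℤ) : ZMod p) := isUnit_iff_ne_zero.mpr hx0
  have hχx : ∀ ℓ : ℕ, (χ ^ ℓ) ((x : ℤ) : ZMod p) = η ^ (m * ℓ) := by
    intro ℓ
    rcases Nat.eq_zero_or_pos ℓ with h | h
    · rw [h, pow_zero, mul_zero, pow_zero, MulChar.one_apply hxu]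
    · rw [MulChar.pow_apply' χ (by omega), ← hm, map_pow, hgη, ← pow_mul]
  have step1 : ∑ ℓ ∈ Finset.range (p - 1), (∑ i ∈ S, η ^ (i * ℓ)) * (χ ^ ℓ) ((x : ℤ) : ZMod p)
      = ∑ i ∈ S, ∑ ℓ ∈ Finset.range (p - 1), (η ^ (i + m)) ^ ℓ := by
    rw [show (∑ ℓ ∈ Finset.range (p - 1), (∑ i ∈ S, η ^ (i * ℓ)) * (χ ^ ℓ) ((x : ℤ) : ZMod p))
        = ∑ ℓ ∈ Finset.range (p - 1), ∑ i ∈ S, (η ^ (i + m)) ^ ℓ from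
      Finset.sum_congr rfl fun ℓ _ => by
        rw [hχx ℓ, Finset.sum_mul]
        exact Finset.sum_congr rfl fun i _ => by rw [← pow_mul, ← pow_add, ← add_mul, pow_mul]]
    exact Finset.sum_comm
  rw [step1]
  have step2 : ∑ i ∈ S, ∑ ℓ ∈ Finset.range (p - 1), (η ^ (i + m)) ^ ℓ
      = ∑ i ∈ S, if i = p - 1 - m then ((p - 1 : ℕ) : ℂ) else 0 := by
    refine Finset.sum_congr rfl fun i hi => ?_
    rw [geo_sum (p - 1) η hη (i + m)]
    rw [hS, Finset.mem_filter, Finset.mem_Icc] at hi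
    have hiff : (p - 1) ∣ (i + m) ↔ i = p - 1 - m := by
      constructor
      · rintro ⟨c, hc⟩
        rcases c with _ | _ | c
        · omega
        · omega
        · exfalso
          have h2 : (p - 1) * 2 ≤ (p - 1) * (c + 1 + 1) := Nat.mul_le_mul_left _ (by omega)
          omega
      · rintro rfl
        exact ⟨1, by omega⟩
    simp only [hiff]
  rw [step2, Finset.sum_ite_eq' S (p - 1 - m) (fun _ => ((p - 1 : ℕ) : ℂ))]
  obtain ⟨gu, hgu⟩ := isUnit_iff_ne_zero.mpr hg0
  have hogu : orderOf gu = p - 1 := by rw [← orderOf_units, hgu]; exact hog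
  have hdvd2 : 2 ∣ p - 1 := ⟨(p - 1) / 2, by omega⟩
  have claimA : (∃ y : ℤ, y ^ 2 ≡ x [ZMOD p]) ↔ m % 2 = 0 := by
    constructor
    · rintro ⟨y, hy⟩
      have hyx : ((y ^ 2 : ℤ) : ZMod p) = ((x : ℤ) : ZMod p) :=
        (ZMod.intCast_eq_intCast_iff _ _ _).mpr hy
      push_cast at hyx
      have hy0 : ((y : ℤ) : ZMod p) ≠ 0 := by
        intro h0
        rw [h0, zero_pow (by norm_num)] at hyx
        exact hx0 hyx.symm
      obtain ⟨k, hk⟩ := hg _ hy0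
      have hzz : gz ^ (k * 2) = gz ^ m := by
        rw [pow_mul, hk, hyx, ← hm]
      have huu : gu ^ (k * 2) = gu ^ m := Units.ext (by
        rw [Units.val_pow_eq_pow_val, Units.val_pow_eq_pow_val, hgu]; exact hzz)
      have hmod : k * 2 ≡ m [MOD p - 1] := by
        rw [← hogu]; exact pow_eq_pow_iff_modEq.mp huu
      have h2 : k * 2 ≡ m [MOD 2] := Nat.ModEq.of_dvd hdvd2 hmod
      unfold Nat.ModEq at h2
      omega
    · intro hEv
      refine ⟨g ^ (m / 2), ?_⟩
      rw [← ZMod.intCast_eq_intCast_iff]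
      push_cast
      rw [← pow_mul, show m / 2 * 2 = m by omega, ← hgz, hm]
  have hordx : orderOf ((x : ℤ) : ZMod p) = (p - 1) / Nat.gcd (p - 1) m := by
    have hux : ((gu ^ m : (ZMod p)ˣ) : ZMod p) = ((x : ℤ) : ZMod p) := by
      rw [Units.val_pow_eq_pow_val, hgu, hm]
    rw [← hux, orderOf_units, orderOf_pow, hogu]
  have claimB : IsPrimitiveRootModP p x ↔ Nat.gcd (p - 1) m = 1 := by
    rw [show IsPrimitiveRootModP p x ↔ orderOf ((x : ℤ) : ZMod p) = p - 1 from
        prim_iff_order p _ hx0, hordx]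
    have hgpos : 0 < Nat.gcd (p - 1) m := Nat.gcd_pos_of_pos_left _ (by omega)
    constructor
    · intro h
      by_contra hne1
      have := Nat.div_lt_self (show 0 < p - 1 by omega) (show 1 < Nat.gcd (p - 1) m by omega)
      omega
    · intro h; rw [h, Nat.div_one]
  have hgcdeq : Nat.gcd (p - 1 - m) (p - 1) = Nat.gcd (p - 1) m := by
    set a := p - 1 - m with ha
    rw [show p - 1 = a + m by omega, Nat.gcd_self_add_right, Nat.gcd_add_self_left]
  have key : (p - 1 - m ∈ S) ↔ IsQNRNP p x := by
    rw [hS, Finset.mem_filter, Finset.mem_Icc]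
    unfold IsQNRNP
    rw [claimA, claimB, hgcdeq]
    have hgpos : 0 < Nat.gcd (p - 1) m := Nat.gcd_pos_of_pos_left _ (by omega)
    rw [Nat.odd_iff]
    omega
  simp only [key]
  congr 1
  push_cast [Nat.cast_sub (by omega : 1 ≤ p)]
  ring
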